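/- For C ∈ Mat(n, ℂ), λ ∈ ℂⁿ with all λ_k ≠ 0 and C(λ) = C + diag(λ) invertible, the inverse is given by C(λ)⁻¹ = (det C(λ))⁻¹ (∏_{k=1}^n λ_k) Σ_{∅≠α⊆{1,…,n}} Aᵀ(C_α)/λ_α, where C_α is the principal submatrix of C on index set α, A(C_α) its adjugate (cofactor) matrix embedded back into Mat(n,ℂ) on the coordinates α with zeros elsewhere, Aᵀ its transpose, and λ_α = ∏_{i∈α} λ_i; here A(C_{k}) is the 1×1 matrix (1) for singletons. -/
import Mathlib


open Matrix

/-- The `n × n` matrix supported on `α × α` whose `α × α` block is the adjugate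
(the transposed cofactor matrix `Aᵀ(C_α)`) of the principal submatrix `C_α`. -/
noncomputable def embedAdjugate {n : ℕ} (C : Matrix (Fin n) (Fin n) ℂ)
    (α : Finset (Fin n)) : Matrix (Fin n) (Fin n) ℂ :=
  Matrix.of fun i j =>
    if hi : i ∈ α then
      if hj : j ∈ α then
        (C.submatrix (fun i : α => (i : Fin n)) (fun j : α => (j : Fin n))).adjugate
          ⟨i, hi⟩ ⟨j, hj⟩
      else 0
    else 0

/-- det of the matrix whose rows on `s` come from `A` and whose rows off `s` are unit vectors. -/
lemma det_piecewise_single {n : ℕ} (A : Matrix (Fin n) (Fin n) ℂ) (s : Finset (Fin n)) :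
    (Matrix.of (s.piecewise (fun k => A k) (fun k => (Pi.single k 1 : Fin n → ℂ)))).det
      = (A.submatrix (fun i : s => (i : Fin n)) (fun j : s => (j : Fin n))).det := by
  set B : Matrix (Fin n) (Fin n) ℂ :=
    Matrix.of (s.piecewise (fun k => A k) (fun k => (Pi.single k 1 : Fin n → ℂ)))
  let e := Equiv.sumCompl (· ∈ s)
  have h1 : (B.submatrix e e) =
      Matrix.fromBlocks (A.submatrix (fun i : s => (i : Fin n)) (fun j : s => (j : Fin n)))
        (A.submatrix (fun i : s => (i : Fin n)) (fun j : {x // ¬ x ∈ s} => (j : Fin n)))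
        0 1 := by
    ext i j
    cases i with
    | inl i =>
      cases j with
      | inl j => simp [B, e, Finset.piecewise_eq_of_mem _ _ _ i.2]
      | inr j => simp [B, e, Finset.piecewise_eq_of_mem _ _ _ i.2]
    | inr i =>
      cases j with
      | inl j =>
        have : (i : Fin n) ≠ (j : Fin n) := fun h => i.2 (h ▸ j.2)
        simp [B, e, Finset.piecewise_eq_of_notMem _ _ _ i.2, Pi.single_apply,
          (Ne.symm this)]
      | inr j =>
        simp [B, e, Finset.piecewise_eq_of_notMem _ _ _ i.2, Pi.single_apply,
          Matrix.one_apply, Subtype.ext_iff, eq_comm]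
  calc B.det = (B.submatrix e e).det := (Matrix.det_submatrix_equiv_self e B).symm
    _ = _ := by rw [h1, Matrix.det_fromBlocks_zero₂₁]; simp

/-- Determinant expansion of `A + diagonal l` over principal minors. -/
lemma det_add_diagonal {n : ℕ} (A : Matrix (Fin n) (Fin n) ℂ) (l : Fin n → ℂ) :
    (A + Matrix.diagonal l).det =
      ∑ s : Finset (Fin n), (∏ k ∈ sᶜ, l k) *
        (A.submatrix (fun i : s => (i : Fin n)) (fun j : s => (j : Fin n))).det := by
  have hrow : (A + Matrix.diagonal l) =
      Matrix.of (fun k => A k + (fun k : Fin n => l k • (Pi.single k 1 : Fin n → ℂ)) k) := by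
    ext i j
    by_cases h : i = j <;> simp [Matrix.diagonal_apply, Pi.single_apply, h, eq_comm]
  rw [hrow]
  have := (Matrix.detRowAlternating : AlternatingMap ℂ (Fin n → ℂ) ℂ (Fin n)).toMultilinearMap.map_add_univ
    (fun k => A k) (fun k : Fin n => l k • (Pi.single k 1 : Fin n → ℂ))
  rw [show Matrix.det (Matrix.of fun k => A k + l k • (Pi.single k 1 : Fin n → ℂ)) =
      (Matrix.detRowAlternating : AlternatingMap ℂ (Fin n → ℂ) ℂ (Fin n)).toMultilinearMap
        (fun k => A k + l k • (Pi.single k 1 : Fin n → ℂ)) from rfl]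
  rw [show (fun k => A k + l k • (Pi.single k 1 : Fin n → ℂ)) =
      ((fun k => A k) + fun k : Fin n => l k • (Pi.single k 1 : Fin n → ℂ)) from rfl, this]
  refine Finset.sum_congr rfl fun s _ => ?_
  have hpc : s.piecewise (fun k => A k) (fun k : Fin n => l k • (Pi.single k 1 : Fin n → ℂ))
      = sᶜ.piecewise (fun k : Fin n => l k • (Pi.single k 1 : Fin n → ℂ)) (fun k => A k) :=
    (Finset.piecewise_compl s _ _).symm
  rw [hpc]
  have hm := (Matrix.detRowAlternating : AlternatingMap ℂ (Fin n → ℂ) ℂ (Fin n)).toMultilinearMap.map_piecewise_smul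
    l (sᶜ.piecewise (fun k : Fin n => (Pi.single k 1 : Fin n → ℂ)) (fun k => A k)) sᶜ
  have hrw : sᶜ.piecewise (fun k : Fin n => l k • (Pi.single k 1 : Fin n → ℂ)) (fun k => A k)
      = sᶜ.piecewise (fun k : Fin n => l k • ((sᶜ.piecewise (fun k : Fin n => (Pi.single k 1 : Fin n → ℂ)) (fun k => A k)) k))
          (sᶜ.piecewise (fun k : Fin n => (Pi.single k 1 : Fin n → ℂ)) (fun k => A k)) := by
    ext k x
    by_cases hk : k ∈ sᶜ <;>
      simp [Finset.piecewise_eq_of_mem, Finset.piecewise_eq_of_notMem, hk]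
  rw [hrw, hm, ← det_piecewise_single A s]
  have : sᶜ.piecewise (fun k : Fin n => (Pi.single k 1 : Fin n → ℂ)) (fun k => A k)
      = s.piecewise (fun k => A k) (fun k : Fin n => (Pi.single k 1 : Fin n → ℂ)) :=
    Finset.piecewise_compl s _ _
  rw [this, smul_eq_mul]
  rfl

lemma adjugate_add_diagonal {n : ℕ} (C : Matrix (Fin n) (Fin n) ℂ) (l : Fin n → ℂ) :
    (C + Matrix.diagonal l).adjugate =
      ∑ α : Finset (Fin n), (∏ k ∈ αᶜ, l k) • embedAdjugate C α := by
  ext i j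
  rw [Matrix.adjugate_apply]
  have key : (C + Matrix.diagonal l).updateRow j (Pi.single i 1)
      = (C.updateRow j (Pi.single i 1)) + Matrix.diagonal (Function.update l j 0) := by
    ext a b
    by_cases h : a = j
    · subst h
      simp [Matrix.diagonal_apply, Function.update_apply, Pi.single_apply]
    · simp [Matrix.updateRow_ne h, Matrix.diagonal_apply, Function.update_apply, h]
  rw [key, det_add_diagonal]
  rw [Matrix.sum_apply]
  refine Finset.sum_congr rfl fun s _ => ?_
  rw [Matrix.smul_apply, smul_eq_mul]
  by_cases hj : j ∈ s
  · have hprod : (∏ k ∈ sᶜ, Function.update l j 0 k) = ∏ k ∈ sᶜ, l k :=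
      Finset.prod_congr rfl fun k hk =>
        Function.update_of_ne (fun h => (Finset.mem_compl.mp hk) (by rw [h]; exact hj)) 0 l
    rw [hprod]
    congr 1
    by_cases hi : i ∈ s
    · have hsub : ((C.updateRow j (Pi.single i 1)).submatrix
          (fun a : s => (a : Fin n)) (fun b : s => (b : Fin n)))
        = (C.submatrix (fun a : s => (a : Fin n)) (fun b : s => (b : Fin n))).updateRow
            ⟨j, hj⟩ (Pi.single ⟨i, hi⟩ 1) := by
        ext a b
        by_cases h : a = (⟨j, hj⟩ : s)
        · subst h
          simp [Pi.single_apply, Subtype.ext_iff]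
        · have h' : (a : Fin n) ≠ j := fun hh => h (Subtype.ext hh)
          simp [Matrix.updateRow_ne h, Matrix.updateRow_ne h']
      rw [hsub, ← Matrix.adjugate_apply]
      simp [embedAdjugate, hi, hj]
    · have hzero : ∀ b : s, ((C.updateRow j (Pi.single i 1)).submatrix
          (fun a : s => (a : Fin n)) (fun b : s => (b : Fin n))) ⟨j, hj⟩ b = 0 := by
        intro b
        have : (b : Fin n) ≠ i := fun hh => hi (hh ▸ b.2)
        simp [Pi.single_apply, this]
      rw [Matrix.det_eq_zero_of_row_eq_zero ⟨j, hj⟩ hzero]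
      simp [embedAdjugate, hi]
  · have : (∏ k ∈ sᶜ, Function.update l j 0 k) = 0 :=
      Finset.prod_eq_zero (Finset.mem_compl.mpr hj) (Function.update_self j 0 l)
    rw [this]
    simp [embedAdjugate, hj]

/-- The generalized resolvent:
`C(λ)⁻¹ = (det C(λ))⁻¹ (∏ λ_k) ∑_{∅ ≠ α} Aᵀ(C_α)/λ_α`. -/
theorem inv_add_diagonal_eq_sum_adjugates (n : ℕ) (C : Matrix (Fin n) (Fin n) ℂ)
    (l : Fin n → ℂ) (hl : ∀ k, l k ≠ 0)
    (hinv : IsUnit (C + Matrix.diagonal l).det) :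
    (C + Matrix.diagonal l)⁻¹ =
      ((C + Matrix.diagonal l).det)⁻¹ • (∏ k, l k) •
        ∑ α ∈ Finset.univ.filter (fun α : Finset (Fin n) => α.Nonempty),
          (∏ i ∈ α, l i)⁻¹ • embedAdjugate C α := by
  rw [Matrix.inv_def, Ring.inverse_eq_inv']
  congr 1
  rw [adjugate_add_diagonal]
  have hfull : ∑ α ∈ Finset.univ.filter (fun α : Finset (Fin n) => α.Nonempty),
      (∏ i ∈ α, l i)⁻¹ • embedAdjugate C α
      = ∑ α : Finset (Fin n), (∏ i ∈ α, l i)⁻¹ • embedAdjugate C α := by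
    refine Finset.sum_subset (Finset.filter_subset _ _) fun α _ hα => ?_
    have : α = ∅ := by
      by_contra h
      exact hα (Finset.mem_filter.mpr ⟨Finset.mem_univ _, Finset.nonempty_iff_ne_empty.mpr h⟩)
    subst this
    have : embedAdjugate C (∅ : Finset (Fin n)) = 0 := by
      ext a b; simp [embedAdjugate]
    simp [this]
  rw [hfull, Finset.smul_sum]
  refine (Finset.sum_congr rfl fun α _ => ?_).symm
  rw [smul_smul]
  congr 1
  rw [← Finset.prod_mul_prod_compl α l]
  field_simp [Finset.prod_ne_zero_iff.mpr fun k _ => hl k]
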